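/- arXiv:2407.16239 — 4 statements merged into one kernel-verified Lean document; each statement's English description precedes it below -/
import Mathlib

section
/- Let g : ℝⁿ → ℝⁿ be a C¹ diffeomorphism with inverse f = g⁻¹, let σ > 0, and let μ₁, …, μ_Q ∈ ℝⁿ be such that the differences {μ_ξ − μ₁ : ξ = 2, …, Q} span ℝⁿ. For each ξ let p_ξ be the Lebesgue density of the pushforward under g of the Gaussian measure N(μ_ξ, σ²Iₙ). Suppose there exist a function h : ℝⁿ → ℝⁿ, vectors w_ξ ∈ ℝⁿ and scalars b_ξ, c_ξ (ξ = 2, …, Q) such that for all x ∈ ℝⁿ and all ξ: w_ξᵀ h(x) + b_ξ = log p_ξ(x) − log p₁(x) + c_ξ. Then there exist an invertible matrix A ∈ ℝⁿˣⁿ and a vector d ∈ ℝⁿ such that A h(x) + d = f(x) = g⁻¹(x) for all x ∈ ℝⁿ; that is, the feature extractor h recovers the true latents up to an invertible affine transformation. -/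
open Real

/-- **Identifiability of the latent variable model (paper's Theorem 1).**
Let `g : ℝⁿ → ℝⁿ` be a C¹ diffeomorphism with C¹ inverse `f = g⁻¹`, `σ > 0`, and let
`μ₁, …, μ_Q` (class `1` is index `0` here) be such that the differences `{μ_ξ − μ₁ : ξ ≠ 1}`
span `ℝⁿ`. Let `p_ξ(x) = (2πσ²)^{−n/2} exp(−‖f(x) − μ_ξ‖²/(2σ²)) |det Df(x)|` be the
Lebesgue density of the pushforward under `g` of `N(μ_ξ, σ²Iₙ)`. If a feature extractor
`h : ℝⁿ → ℝⁿ` satisfies, for some `w_ξ, b_ξ, c_ξ`,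
`w_ξᵀh(x) + b_ξ = log p_ξ(x) − log p₁(x) + c_ξ` for all `x` and all `ξ ≠ 1`, then there are
an invertible matrix `A` and a vector `d` with `A h(x) + d = f(x) = g⁻¹(x)` for all `x`:
`h` recovers the true latents up to an invertible affine transformation. -/
theorem latent_identifiability (n Q : ℕ) [NeZero Q] (σ : ℝ) (hσ : 0 < σ)
    (μ : Fin Q → Fin n → ℝ)
    (hspan : Submodule.span ℝ ((fun ξ : Fin Q => μ ξ - μ 0) '' {ξ | ξ ≠ 0}) = ⊤)
    (g f : (Fin n → ℝ) → (Fin n → ℝ))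
    (hg : ContDiff ℝ 1 g) (hf : ContDiff ℝ 1 f)
    (hfg : ∀ x, f (g x) = x) (hgf : ∀ x, g (f x) = x)
    (p : Fin Q → (Fin n → ℝ) → ℝ)
    (hp : ∀ ξ x, p ξ x = (2 * π * σ ^ 2) ^ (-(n : ℝ) / 2) *
      exp (-(∑ i, (f x i - μ ξ i) ^ 2) / (2 * σ ^ 2)) * |(fderiv ℝ f x).det|)
    (h : (Fin n → ℝ) → (Fin n → ℝ)) (w : Fin Q → Fin n → ℝ) (b c : Fin Q → ℝ)
    (hlogit : ∀ (ξ : Fin Q), ξ ≠ 0 → ∀ x : Fin n → ℝ,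
      (∑ i, w ξ i * h x i) + b ξ = log (p ξ x) - log (p 0 x) + c ξ) :
    ∃ (A : Matrix (Fin n) (Fin n) ℝ) (d : Fin n → ℝ),
      IsUnit A.det ∧ ∀ x : Fin n → ℝ, A.mulVec (h x) + d = f x := by
  -- the Jacobian determinant of f is everywhere nonzero
  have hdf : Differentiable ℝ f := hf.differentiable one_ne_zero
  have hdg : Differentiable ℝ g := hg.differentiable one_ne_zero
  have hdet : ∀ x, (fderiv ℝ f x).det ≠ 0 := by
    intro x
    have hcomp : f ∘ g = id := funext hfg
    have h1 : fderiv ℝ (f ∘ g) (f x) =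
        (fderiv ℝ f (g (f x))).comp (fderiv ℝ g (f x)) :=
      fderiv_comp _ (hdf _) (hdg _)
    rw [hcomp, fderiv_id, hgf x] at h1
    have h2 : ((fderiv ℝ f x).det : ℝ) * (fderiv ℝ g (f x)).det = 1 := by
      have := congrArg ContinuousLinearMap.det h1
      simpa [ContinuousLinearMap.det, LinearMap.det_comp] using this.symm
    intro h0
    rw [h0, zero_mul] at h2
    exact zero_ne_one h2
  have hC : (0:ℝ) < (2 * π * σ ^ 2) ^ (-(n : ℝ) / 2) :=
    Real.rpow_pos_of_pos (by positivity) _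
  have hlogp : ∀ ξ x, log (p ξ x) =
      log ((2 * π * σ ^ 2) ^ (-(n : ℝ) / 2)) +
        (-(∑ i, (f x i - μ ξ i) ^ 2) / (2 * σ ^ 2)) + log |(fderiv ℝ f x).det| := by
    intro ξ x
    rw [hp, Real.log_mul (mul_ne_zero hC.ne' (exp_ne_zero _)) (abs_ne_zero.mpr (hdet x)),
      Real.log_mul hC.ne' (exp_ne_zero _), Real.log_exp]
  -- the key affine identity
  set K : Fin Q → ℝ := fun ξ =>
    σ ^ 2 * (b ξ - c ξ) - (∑ i, ((μ 0 i) ^ 2 - (μ ξ i) ^ 2)) / 2 with hK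
  have hkey : ∀ ξ, ξ ≠ 0 → ∀ x, ∑ i, (μ ξ i - μ 0 i) * f x i =
      σ ^ 2 * (∑ i, w ξ i * h x i) + K ξ := by
    intro ξ hξ x
    have e1 := hlogit ξ hξ x
    rw [hlogp ξ x, hlogp 0 x] at e1
    have hsum : (∑ i, (f x i - μ 0 i) ^ 2) - (∑ i, (f x i - μ ξ i) ^ 2) =
        2 * (∑ i, (μ ξ i - μ 0 i) * f x i) + (∑ i, ((μ 0 i) ^ 2 - (μ ξ i) ^ 2)) := by
      rw [← Finset.sum_sub_distrib, Finset.mul_sum, ← Finset.sum_add_distrib]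
      exact Finset.sum_congr rfl fun i _ => by ring
    have hσ2 : (2 * σ ^ 2) ≠ 0 := by positivity
    field_simp at e1
    rw [hK]
    linear_combination (-(1/2) : ℝ) * e1 + (-(1/2) : ℝ) * hsum
  -- linear algebra setup
  set M : Matrix (Fin Q) (Fin n) ℝ :=
    fun ξ i => if ξ = 0 then 0 else μ ξ i - μ 0 i with hM
  have hMker : LinearMap.ker (Matrix.toLin' M) = ⊥ := by
    rw [LinearMap.ker_eq_bot']
    intro y hy
    rw [Matrix.toLin'_apply] at hy
    set φ : (Fin n → ℝ) →ₗ[ℝ] ℝ :=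
      { toFun := fun v => ∑ i, v i * y i
        map_add' := by
          intro a b; simp [add_mul, Finset.sum_add_distrib]
        map_smul' := by
          intro a v; simp [Finset.mul_sum, mul_assoc] } with hφ
    have hsle : Submodule.span ℝ ((fun ξ : Fin Q => μ ξ - μ 0) '' {ξ | ξ ≠ 0}) ≤
        LinearMap.ker φ := by
      rw [Submodule.span_le]
      rintro v ⟨ξ, hξ, rfl⟩
      rw [Set.mem_setOf_eq] at hξ
      have := congrFun hy ξ
      simp only [Matrix.mulVec, dotProduct, hM, Pi.zero_apply, if_neg hξ] at this
      simpa [hφ, LinearMap.mem_ker] using this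
    have hy0 : φ y = 0 := hsle (hspan ▸ Submodule.mem_top)
    have : ∑ i, y i * y i = 0 := hy0
    funext i
    have := (Finset.sum_eq_zero_iff_of_nonneg
      (fun i _ => mul_self_nonneg (y i))).mp this i (Finset.mem_univ i)
    exact mul_self_eq_zero.mp this
  obtain ⟨Ψ, hΨ⟩ := (Matrix.toLin' M).exists_leftInverse_of_injective hMker
  set W' : Matrix (Fin Q) (Fin n) ℝ :=
    fun ξ i => if ξ = 0 then 0 else σ ^ 2 * w ξ i with hW
  set k : Fin Q → ℝ := fun ξ => if ξ = 0 then 0 else K ξ with hk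
  have hMf : ∀ x, M.mulVec (f x) = W'.mulVec (h x) + k := by
    intro x
    funext ξ
    by_cases hξ : ξ = 0
    · subst hξ
      simp [Matrix.mulVec, dotProduct, hM, hW, hk]
    · have := hkey ξ hξ x
      simp only [Matrix.mulVec, dotProduct, hM, hW, hk, Pi.add_apply, if_neg hξ]
      rw [this, Finset.mul_sum]
      congr 1
      exact Finset.sum_congr rfl fun i _ => by ring
  set A : Matrix (Fin n) (Fin n) ℝ := LinearMap.toMatrix' (Ψ ∘ₗ Matrix.toLin' W') with hA
  set d : Fin n → ℝ := Ψ k with hd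
  have hAmul : ∀ v, A.mulVec v = Ψ (W'.mulVec v) := by
    intro v
    rw [← Matrix.toLin'_apply, hA, Matrix.toLin'_toMatrix']
    simp [Matrix.toLin'_apply]
  have hmain : ∀ x, A.mulVec (h x) + d = f x := by
    intro x
    have h1 : Ψ (M.mulVec (f x)) = f x := by
      have := congrFun (congrArg (fun (L : _ →ₗ[ℝ] _) => L.toFun) hΨ) (f x)
      simpa [Matrix.toLin'_apply] using this
    rw [hAmul, hd, ← map_add, ← hMf, h1]
  refine ⟨A, d, ?_, hmain⟩
  have hsurj : Function.Surjective (Matrix.toLin' A) := by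
    intro y
    refine ⟨h (g (y + d)), ?_⟩
    rw [Matrix.toLin'_apply]
    have := hmain (g (y + d))
    rw [hfg] at this
    have : A.mulVec (h (g (y + d))) = y + d - d := eq_sub_of_add_eq this
    simpa using this
  have hinj : Function.Injective (Matrix.toLin' A) :=
    (LinearMap.injective_iff_surjective (f := Matrix.toLin' A)).mpr hsurj
  rw [isUnit_iff_ne_zero]
  intro h0
  obtain ⟨v, hv0, hv⟩ := (Matrix.exists_mulVec_eq_zero_iff).mpr h0
  exact hv0 (hinj (show Matrix.toLin' A v = Matrix.toLin' A 0 by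
    simp [Matrix.toLin'_apply, hv]))
end

section
/- Let f, h : ℝⁿ → ℝⁿ, let μ₁, …, μ_Q ∈ ℝⁿ, and suppose there exist vectors v₂, …, v_Q ∈ ℝⁿ and scalars γ₂, …, γ_Q such that for all x ∈ ℝⁿ and all ξ ∈ {2, …, Q}: ⟨μ_ξ − μ₁, f(x)⟩ = ⟨v_ξ, h(x)⟩ + γ_ξ. If the vectors {μ_ξ − μ₁ : ξ = 2, …, Q} span ℝⁿ and f is surjective onto ℝⁿ, then there exist an invertible matrix A ∈ ℝⁿˣⁿ and a vector d ∈ ℝⁿ such that f(x) = A h(x) + d for all x ∈ ℝⁿ. -/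
/-- **Linear-algebraic core of the identifiability theorem.**
Suppose two feature maps `f, h : ℝⁿ → ℝⁿ` satisfy, for every class `ξ ≠ 1`, an affine relation
`⟨μ_ξ − μ₁, f(x)⟩ = ⟨v_ξ, h(x)⟩ + γ_ξ` for all `x`. If the mean differences `{μ_ξ − μ₁}`
span `ℝⁿ` and `f` is surjective, then `f(x) = A h(x) + d` for some invertible matrix `A`
and vector `d`. (Class `1` of the paper is index `0` here.) -/
theorem affine_relations_give_affine_identifiability (n Q : ℕ) [NeZero Q]
    (f h : (Fin n → ℝ) → (Fin n → ℝ))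
    (μ : Fin Q → Fin n → ℝ) (v : Fin Q → Fin n → ℝ) (γ : Fin Q → ℝ)
    (hrel : ∀ (ξ : Fin Q), ξ ≠ 0 → ∀ x : Fin n → ℝ,
      ∑ i, (μ ξ i - μ 0 i) * f x i = (∑ i, v ξ i * h x i) + γ ξ)
    (hspan : Submodule.span ℝ ((fun ξ : Fin Q => μ ξ - μ 0) '' {ξ | ξ ≠ 0}) = ⊤)
    (hsurj : Function.Surjective f) :
    ∃ (A : Matrix (Fin n) (Fin n) ℝ) (d : Fin n → ℝ),
      IsUnit A.det ∧ ∀ x : Fin n → ℝ, f x = A.mulVec (h x) + d := by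
  classical
  set S := ((fun ξ : Fin Q => μ ξ - μ 0) '' {ξ | ξ ≠ 0}) with hS
  obtain ⟨t, hts, htsp, hli⟩ := exists_linearIndependent ℝ S
  rw [hspan] at htsp
  let b : Module.Basis t ℝ (Fin n → ℝ) :=
    Module.Basis.mk hli (by rw [Subtype.range_coe, htsp])
  haveI : Fintype t := FiniteDimensional.fintypeBasisIndex b
  have hcard : Fintype.card t = n := by
    have h1 := Module.finrank_eq_card_basis b
    have h2 : Module.finrank ℝ (Fin n → ℝ) = n := by
      simp [Module.finrank_fintype_fun_eq_card]
    omega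
  let e := Fintype.equivFinOfCardEq hcard
  let b' : Module.Basis (Fin n) ℝ (Fin n → ℝ) := b.reindex e
  -- choose indices
  have hmem : ∀ i : Fin n, ∃ ξi : Fin Q, ξi ≠ 0 ∧ μ ξi - μ 0 = b' i := by
    intro i
    have hb'i : (b' i : Fin n → ℝ) = ((e.symm i : t) : Fin n → ℝ) := by
      simp [b', b, Module.Basis.reindex_apply, Module.Basis.mk_apply]
    have : ((e.symm i : t) : Fin n → ℝ) ∈ S := hts (e.symm i).2
    obtain ⟨ξi, hξi, hval⟩ := this
    exact ⟨ξi, hξi, by simp only at hval; rw [hval, ← hb'i]⟩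
  choose ξ hξ0 hξval using hmem
  let M : Matrix (Fin n) (Fin n) ℝ := Matrix.of fun i j => b' i j
  let N : Matrix (Fin n) (Fin n) ℝ := Matrix.of fun i j => v (ξ i) j
  let c : Fin n → ℝ := fun i => γ (ξ i)
  -- M is invertible
  have hMunit : IsUnit M.det := by
    refine (Matrix.isUnit_iff_isUnit_det _).mp ?_
    rw [← Matrix.vecMul_surjective_iff_isUnit]
    intro z
    refine ⟨b'.repr z, funext fun j => ?_⟩
    have hz := congrFun (b'.sum_repr z) j
    simp only [Finset.sum_apply, Pi.smul_apply, smul_eq_mul] at hz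
    simpa [Matrix.vecMul, dotProduct, M] using hz
  -- key relation
  have hkey : ∀ x, M.mulVec (f x) = N.mulVec (h x) + c := by
    intro x
    funext i
    have hrow : ∀ j, M i j = μ (ξ i) j - μ 0 j := by
      intro j
      have := congrFun (hξval i) j
      simpa [M] using this.symm
    have := hrel (ξ i) (hξ0 i) x
    simp only [Matrix.mulVec, dotProduct, Pi.add_apply]
    calc ∑ j, M i j * f x j = ∑ j, (μ (ξ i) j - μ 0 j) * f x j := by
          exact Finset.sum_congr rfl fun j _ => by rw [hrow j]
      _ = (∑ j, v (ξ i) j * h x j) + γ (ξ i) := this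
      _ = (∑ j, N i j * h x j) + c i := rfl
  set A := M⁻¹ * N with hA
  set d := M⁻¹.mulVec c with hd
  have hfx : ∀ x, f x = A.mulVec (h x) + d := by
    intro x
    have h1 : M⁻¹.mulVec (M.mulVec (f x)) = f x := by
      rw [Matrix.mulVec_mulVec, Matrix.nonsing_inv_mul M hMunit, Matrix.one_mulVec]
    rw [← h1, hkey x, Matrix.mulVec_add, Matrix.mulVec_mulVec]
  refine ⟨A, d, ?_, hfx⟩
  have hAsurj : Function.Surjective A.mulVec := by
    intro y
    obtain ⟨x, hx⟩ := hsurj (y + d)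
    refine ⟨h x, ?_⟩
    have := hfx x
    rw [hx] at this
    have := this.symm
    simpa using congrArg (fun z => z - d) this
  exact (Matrix.isUnit_iff_isUnit_det _).mp (Matrix.mulVec_surjective_iff_isUnit.mp hAsurj)
end

section
/- Fix σ > 0, n ≥ 1, K ≥ 2. Let (Ω, P) be a probability space and η₁, η₂, … : Ω → ℝⁿ be i.i.d. random vectors whose n coordinates are independent N(0, σ²) Gaussians. Let z ∈ ℝⁿ and let θ₁, …, θ_K ∈ ℝⁿ be arm parameters with ‖θ_a‖₂ = 1 for all a. Let a* ∈ {1, …, K} and Δ > 0 satisfy (θ_{a*} − θ_a)ᵀz > Δ for all a ≠ a*. For t ≥ 1 define ẑ_t = z + (1/t)Σ_{s=1}^t η_s, let a_t ∈ argmax_{a} θ_aᵀ ẑ_t be the Greedy1 action (measurably chosen), let R_T = Σ_{t=1}^T (θ_{a*} − θ_{a_t})ᵀz be the cumulative regret, and let Δ̄ = max_{a ≠ a*} (θ_{a*} − θ_a)ᵀz. Then for every T, the expected regret satisfies E[R_T] ≤ 2K Δ̄ (exp(Δ²/(8σ²)) − 1)⁻¹; in particular the expected regret of Greedy1 is bounded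 by a constant independent of T. -/
open MeasureTheory ProbabilityTheory Real Finset
open scoped NNReal ENNReal

lemma gauss_complete_square (v u x : ℝ) (hv : v ≠ 0) :
    u * x + (-(x - 0) ^ 2 / (2 * v)) = v * u ^ 2 / 2 + (-(x - u * v) ^ 2 / (2 * v)) := by
  field_simp; ring

lemma integrable_shifted_gauss (v m : ℝ) (hv : 0 < v) :
    Integrable (fun x : ℝ => rexp (-(x - m) ^ 2 / (2 * v))) volume := by
  have h : (fun x : ℝ => rexp (-(x - m) ^ 2 / (2 * v)))
      = fun x => (fun y : ℝ => rexp (-(1 / (2 * v)) * y ^ 2)) (x - m) := by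
    funext x; congr 1; field_simp
  rw [h]
  exact (integrable_exp_neg_mul_sq (by positivity)).comp_sub_right m

lemma integral_shifted_gauss (v m : ℝ) (hv : 0 < v) :
    ∫ x : ℝ, rexp (-(x - m) ^ 2 / (2 * v)) = Real.sqrt (2 * π * v) := by
  have h : (fun x : ℝ => rexp (-(x - m) ^ 2 / (2 * v)))
      = fun x => (fun y : ℝ => rexp (-(1 / (2 * v)) * y ^ 2)) (x - m) := by
    funext x; congr 1; field_simp
  rw [h, integral_sub_right_eq_self (fun y : ℝ => rexp (-(1 / (2 * v)) * y ^ 2)) m,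
    integral_gaussian]
  congr 1
  rw [div_div_eq_mul_div, div_one]
  ring

lemma key_pointwise (v u : ℝ) (hv : 0 < v) (x : ℝ) :
    rexp (u * x) * gaussianPDFReal 0 v.toNNReal x
      = (Real.sqrt (2 * π * v))⁻¹ * rexp (v * u ^ 2 / 2) * rexp (-(x - u * v) ^ 2 / (2 * v)) := by
  have hc : ((v.toNNReal : ℝ≥0) : ℝ) = v := Real.coe_toNNReal v hv.le
  rw [gaussianPDFReal, hc]
  calc rexp (u * x) * ((Real.sqrt (2 * π * v))⁻¹ * rexp (-(x - 0) ^ 2 / (2 * v)))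
      = (Real.sqrt (2 * π * v))⁻¹ * rexp (u * x + -(x - 0) ^ 2 / (2 * v)) := by
        rw [Real.exp_add]; ring
    _ = (Real.sqrt (2 * π * v))⁻¹ * rexp (v * u ^ 2 / 2 + -(x - u * v) ^ 2 / (2 * v)) := by
        rw [gauss_complete_square v u x hv.ne']
    _ = (Real.sqrt (2 * π * v))⁻¹ * rexp (v * u ^ 2 / 2) * rexp (-(x - u * v) ^ 2 / (2 * v)) := by
        rw [Real.exp_add]; ring

lemma integrable_exp_mul_gaussian_pdf (v u : ℝ) (hv : 0 < v) :
    Integrable (fun x : ℝ => rexp (u * x) * gaussianPDFReal 0 v.toNNReal x) volume := by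
  have h : (fun x : ℝ => rexp (u * x) * gaussianPDFReal 0 v.toNNReal x)
      = fun x => (Real.sqrt (2 * π * v))⁻¹ * rexp (v * u ^ 2 / 2)
          * rexp (-(x - u * v) ^ 2 / (2 * v)) := by
    funext x; exact key_pointwise v u hv x
  rw [h]
  exact (integrable_shifted_gauss v (u * v) hv).const_mul _

lemma integral_exp_mul_gaussian_pdf (v u : ℝ) (hv : 0 < v) :
    ∫ x : ℝ, rexp (u * x) * gaussianPDFReal 0 v.toNNReal x = rexp (v * u ^ 2 / 2) := by
  have h : (fun x : ℝ => rexp (u * x) * gaussianPDFReal 0 v.toNNReal x)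
      = fun x => (Real.sqrt (2 * π * v))⁻¹ * rexp (v * u ^ 2 / 2)
          * rexp (-(x - u * v) ^ 2 / (2 * v)) := by
    funext x; exact key_pointwise v u hv x
  rw [h, integral_const_mul, integral_shifted_gauss v (u * v) hv]
  have hs : Real.sqrt (2 * π * v) ≠ 0 := by positivity
  field_simp

lemma integrable_exp_mul_gaussianReal (v u : ℝ) (hv : 0 < v) :
    Integrable (fun x : ℝ => rexp (u * x)) (gaussianReal 0 v.toNNReal) := by
  have hvne : (v.toNNReal : ℝ≥0) ≠ 0 := by
    simp [Real.toNNReal_eq_zero, not_le, hv]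
  rw [gaussianReal_of_var_ne_zero 0 hvne]
  rw [integrable_withDensity_iff (measurable_gaussianPDF 0 _)
    (Filter.Eventually.of_forall fun x => ENNReal.ofReal_lt_top)]
  have : (fun x : ℝ => rexp (u * x) * (gaussianPDF 0 v.toNNReal x).toReal)
      = fun x => rexp (u * x) * gaussianPDFReal 0 v.toNNReal x := by
    funext x
    rw [gaussianPDF, ENNReal.toReal_ofReal (gaussianPDFReal_nonneg _ _ _)]
  rw [this]
  exact integrable_exp_mul_gaussian_pdf v u hv

lemma integral_exp_mul_gaussianReal (v u : ℝ) (hv : 0 < v) :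
    ∫ x, rexp (u * x) ∂(gaussianReal 0 v.toNNReal) = rexp (v * u ^ 2 / 2) := by
  have hvne : (v.toNNReal : ℝ≥0) ≠ 0 := by
    simp [Real.toNNReal_eq_zero, not_le, hv]
  rw [gaussianReal_of_var_ne_zero 0 hvne]
  have hd : (gaussianPDF 0 v.toNNReal)
      = fun x => ((Real.toNNReal (gaussianPDFReal 0 v.toNNReal x) : ℝ≥0) : ℝ≥0∞) := by
    funext x; rfl
  rw [hd, integral_withDensity_eq_integral_smul
    ((measurable_gaussianPDFReal 0 _).real_toNNReal)]
  have : (fun x : ℝ => Real.toNNReal (gaussianPDFReal 0 v.toNNReal x) • rexp (u * x))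
      = fun x => rexp (u * x) * gaussianPDFReal 0 v.toNNReal x := by
    funext x
    rw [NNReal.smul_def, smul_eq_mul,
      Real.coe_toNNReal _ (gaussianPDFReal_nonneg _ _ _), mul_comm]
  rw [this]
  exact integral_exp_mul_gaussian_pdf v u hv
open scoped NNReal ENNReal

lemma greedy_tail_bound (n : ℕ) (σ Δ : ℝ) (hσ : 0 < σ) (hΔ : 0 < Δ)
    (Ω : Type*) [MeasurableSpace Ω] (P : Measure Ω) [IsProbabilityMeasure P]
    (η : ℕ → Ω → (Fin n → ℝ)) (hmeas : ∀ s, Measurable (η s))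
    (hindep : iIndepFun (fun (p : ℕ × Fin n) ω => η p.1 ω p.2) P)
    (hgauss : ∀ (s : ℕ) (i : Fin n),
      Measure.map (fun ω => η s ω i) P = gaussianReal 0 ⟨σ ^ 2, sq_nonneg σ⟩)
    (w : Fin n → ℝ) (hw : ∑ i, w i ^ 2 ≤ 4) (t : ℕ) (ht : 1 ≤ t) :
    (P {ω | (t : ℝ) * Δ ≤ ∑ s ∈ Icc 1 t, ∑ i, w i * η s ω i}).toReal ≤
      rexp (-((t : ℝ) * (Δ ^ 2 / (8 * σ ^ 2)))) := by
  have hv : (0 : ℝ) < σ ^ 2 := by positivity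
  have hNN : (σ ^ 2).toNNReal = (⟨σ ^ 2, sq_nonneg σ⟩ : ℝ≥0) := by
    ext; exact Real.coe_toNNReal _ hv.le
  set l : ℝ := Δ / (4 * σ ^ 2) with hl
  have hl0 : 0 < l := by positivity
  set X : ℕ × Fin n → Ω → ℝ := fun p ω => w p.2 * η p.1 ω p.2 with hX
  have hXm : ∀ p, Measurable (X p) := fun p =>
    ((measurable_pi_apply p.2).comp (hmeas p.1)).const_mul (w p.2)
  have hXindep : iIndepFun X P := by
    have := hindep.comp (fun p (x : ℝ) => w p.2 * x) (fun p => measurable_const_mul (w p.2))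
    exact this
  have hcomp : ∀ (p : ℕ × Fin n) (ω : Ω), l * X p ω = (l * w p.2) * η p.1 ω p.2 := by
    intro p ω; rw [hX]; ring
  have hηm : ∀ p : ℕ × Fin n, Measurable fun ω => η p.1 ω p.2 := fun p =>
    (measurable_pi_apply p.2).comp (hmeas p.1)
  have hint : ∀ p : ℕ × Fin n, Integrable (fun ω => rexp (l * X p ω)) P := by
    intro p
    have h2 : Integrable (fun x : ℝ => rexp ((l * w p.2) * x))
        (Measure.map (fun ω => η p.1 ω p.2) P) := by
      rw [hgauss p.1 p.2, ← hNN]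
      exact integrable_exp_mul_gaussianReal (σ ^ 2) (l * w p.2) hv
    have h3 := (integrable_map_measure
      (((measurable_const_mul (l * w p.2)).exp).aestronglyMeasurable)
      (hηm p).aemeasurable).mp h2
    simp only [Function.comp_def] at h3
    simpa only [hcomp p] using h3
  have hmgf : ∀ p : ℕ × Fin n, mgf (X p) P l = rexp (σ ^ 2 * (l * w p.2) ^ 2 / 2) := by
    intro p
    have h2 : ∫ x, rexp ((l * w p.2) * x) ∂(Measure.map (fun ω => η p.1 ω p.2) P)
        = rexp (σ ^ 2 * (l * w p.2) ^ 2 / 2) := by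
      rw [hgauss p.1 p.2, ← hNN]
      exact integral_exp_mul_gaussianReal (σ ^ 2) (l * w p.2) hv
    rw [integral_map (hηm p).aemeasurable
      (((measurable_const_mul (l * w p.2)).exp).aestronglyMeasurable)] at h2
    rw [mgf]
    simp only [hcomp]
    exact h2
  set s : Finset (ℕ × Fin n) := (Icc 1 t) ×ˢ (univ : Finset (Fin n)) with hs
  have hYeq : ∀ ω, (∑ u ∈ Icc 1 t, ∑ i, w i * η u ω i) = (∑ p ∈ s, X p) ω := by
    intro ω
    rw [Finset.sum_apply, hs, Finset.sum_product]
  have hYint : Integrable (fun ω => rexp (l * (∑ p ∈ s, X p) ω)) P :=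
    hXindep.integrable_exp_mul_sum hXm (fun p _ => hint p)
  have hchern := measure_ge_le_exp_mul_mgf (X := ∑ p ∈ s, X p) (μ := P)
    ((t : ℝ) * Δ) hl0.le hYint
  have hset : {ω | (t : ℝ) * Δ ≤ ∑ u ∈ Icc 1 t, ∑ i, w i * η u ω i}
      = {ω | (t : ℝ) * Δ ≤ (∑ p ∈ s, X p) ω} := by
    ext ω; simp only [Set.mem_setOf_eq, hYeq ω]
  rw [hset]
  refine hchern.trans ?_
  have hmgfsum : mgf (∑ p ∈ s, X p) P l = rexp ((t : ℝ) * ∑ i, σ ^ 2 * (l * w i) ^ 2 / 2) := by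
    rw [hXindep.mgf_sum hXm s]
    have : ∀ p ∈ s, mgf (X p) P l = rexp (σ ^ 2 * (l * w p.2) ^ 2 / 2) := fun p _ => hmgf p
    rw [Finset.prod_congr rfl this, ← Real.exp_sum, hs, Finset.sum_product]
    congr 1
    have h4 : ∑ x ∈ Icc 1 t, ∑ y : Fin n, σ ^ 2 * (l * w (x, y).2) ^ 2 / 2
        = ∑ _x ∈ Icc 1 t, ∑ i : Fin n, σ ^ 2 * (l * w i) ^ 2 / 2 := rfl
    rw [h4, Finset.sum_const, Nat.card_Icc, nsmul_eq_mul, Nat.add_sub_cancel]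
  rw [hmgfsum]
  rw [← Real.exp_add]
  have hsum_le : ∑ i, σ ^ 2 * (l * w i) ^ 2 / 2 ≤ 2 * σ ^ 2 * l ^ 2 := by
    have : ∑ i, σ ^ 2 * (l * w i) ^ 2 / 2 = (σ ^ 2 * l ^ 2 / 2) * ∑ i, w i ^ 2 := by
      rw [Finset.mul_sum]; congr 1; funext i; ring
    rw [this]
    nlinarith [sq_nonneg (σ * l)]
  have harg : -l * ((t : ℝ) * Δ) + (t : ℝ) * ∑ i, σ ^ 2 * (l * w i) ^ 2 / 2
      ≤ -((t : ℝ) * (Δ ^ 2 / (8 * σ ^ 2))) := by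
    have ht1 : (1 : ℝ) ≤ (t : ℝ) := by exact_mod_cast ht
    have h1 : -l * ((t : ℝ) * Δ) + (t : ℝ) * ∑ i, σ ^ 2 * (l * w i) ^ 2 / 2
        ≤ -l * ((t : ℝ) * Δ) + (t : ℝ) * (2 * σ ^ 2 * l ^ 2) := by
      have := mul_le_mul_of_nonneg_left hsum_le (by positivity : (0:ℝ) ≤ (t : ℝ))
      linarith
    refine h1.trans_eq ?_
    rw [hl]
    field_simp
    ring
  exact Real.exp_le_exp.mpr harg

/-- **Constant expected regret of Greedy1 under a well-specified latent model.**
At each round `t ≥ 1` the algorithm observes `z + η_t` with `η_t` i.i.d. Gaussian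
(`n` independent `N(0,σ²)` coordinates), forms the average `ẑ_t = z + (1/t)Σ_{s=1}^t η_s`,
and plays `a_t ∈ argmax_a θ_aᵀ ẑ_t`. If `(θ_{a*} − θ_a)ᵀz > Δ > 0` for all `a ≠ a*` and all
arms are unit vectors, then for every horizon `T` the expected cumulative regret satisfies
`E[R_T] ≤ 2 K Δ̄ (exp(Δ²/(8σ²)) − 1)⁻¹`, where `Δ̄ = max_{a ≠ a*} (θ_{a*} − θ_a)ᵀz`. -/
theorem greedy1_constant_regret (n K : ℕ) (hn : 1 ≤ n) (hK : 2 ≤ K)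
    (σ Δ : ℝ) (hσ : 0 < σ) (hΔ : 0 < Δ)
    (Ω : Type*) [MeasurableSpace Ω] (P : Measure Ω) [IsProbabilityMeasure P]
    (η : ℕ → Ω → (Fin n → ℝ)) (hmeas : ∀ s, Measurable (η s))
    (hindep : iIndepFun (fun (p : ℕ × Fin n) ω => η p.1 ω p.2) P)
    (hgauss : ∀ (s : ℕ) (i : Fin n),
      Measure.map (fun ω => η s ω i) P = gaussianReal 0 ⟨σ ^ 2, sq_nonneg σ⟩)
    (z : Fin n → ℝ) (θ : Fin K → Fin n → ℝ) (hθ : ∀ a, ∑ i, θ a i ^ 2 = 1)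
    (astar : Fin K)
    (hgap : ∀ a : Fin K, a ≠ astar → Δ < ∑ i, (θ astar i - θ a i) * z i)
    (zhat : ℕ → Ω → (Fin n → ℝ))
    (hzhat : ∀ t ω, zhat t ω = fun i => z i + (t : ℝ)⁻¹ * ∑ s ∈ Icc 1 t, η s ω i)
    (a : ℕ → Ω → Fin K) (hameas : ∀ t, Measurable (a t))
    (hgreedy : ∀ t, 1 ≤ t → ∀ ω, ∀ b : Fin K,
      ∑ i, θ b i * zhat t ω i ≤ ∑ i, θ (a t ω) i * zhat t ω i)
    (Δbar : ℝ)
    (hΔbar_ub : ∀ b : Fin K, b ≠ astar → ∑ i, (θ astar i - θ b i) * z i ≤ Δbar)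
    (hΔbar_mem : ∃ b : Fin K, b ≠ astar ∧ ∑ i, (θ astar i - θ b i) * z i = Δbar) :
    ∀ T : ℕ,
      (∫ ω, ∑ t ∈ Icc 1 T, ∑ i, (θ astar i - θ (a t ω) i) * z i ∂P) ≤
        2 * K * Δbar * (exp (Δ ^ 2 / (8 * σ ^ 2)) - 1)⁻¹ := by
  intro T
  have hσ2 : (0 : ℝ) < σ ^ 2 := by positivity
  set c : ℝ := Δ ^ 2 / (8 * σ ^ 2) with hc
  have hc0 : 0 < c := by positivity
  set r : ℝ := rexp (-c) with hr
  have hr0 : 0 < r := exp_pos _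
  have hr1 : r < 1 := by rw [hr, Real.exp_lt_one_iff]; linarith
  have hΔbar_pos : 0 < Δbar := by
    obtain ⟨b, hb, hbe⟩ := hΔbar_mem
    exact hΔ.trans (hbe ▸ hgap b hb)
  -- integrability of per-round regret
  have hfmeas : ∀ t : ℕ, Measurable (fun ω => ∑ i, (θ astar i - θ (a t ω) i) * z i) :=
    fun t => (measurable_of_countable (fun b : Fin K => ∑ i, (θ astar i - θ b i) * z i)).comp
      (hameas t)
  have hfint : ∀ t : ℕ,
      Integrable (fun ω => ∑ i, (θ astar i - θ (a t ω) i) * z i) P := by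
    intro t
    refine (integrable_const (∑ b : Fin K, |∑ i, (θ astar i - θ b i) * z i|)).mono'
      (hfmeas t).aestronglyMeasurable (Filter.Eventually.of_forall fun ω => ?_)
    calc ‖∑ i, (θ astar i - θ (a t ω) i) * z i‖
        = |∑ i, (θ astar i - θ (a t ω) i) * z i| := rfl
      _ ≤ ∑ b : Fin K, |∑ i, (θ astar i - θ b i) * z i| :=
          Finset.single_le_sum (f := fun b : Fin K => |∑ i, (θ astar i - θ b i) * z i|)
            (fun b _ => abs_nonneg _) (mem_univ (a t ω))
  rw [integral_finset_sum (Icc 1 T) (fun t _ => hfint t)]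
  -- bound on arm-difference norms
  have hwb : ∀ b : Fin K, ∑ i, (θ b i - θ astar i) ^ 2 ≤ 4 := by
    intro b
    calc ∑ i, (θ b i - θ astar i) ^ 2
        ≤ ∑ i, (2 * θ b i ^ 2 + 2 * θ astar i ^ 2) :=
          Finset.sum_le_sum fun i _ => by nlinarith [sq_nonneg (θ b i + θ astar i)]
      _ = 2 * ∑ i, θ b i ^ 2 + 2 * ∑ i, θ astar i ^ 2 := by
          rw [Finset.sum_add_distrib, Finset.mul_sum, Finset.mul_sum]
      _ ≤ 4 := by rw [hθ b, hθ astar]; norm_num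
  -- per-round bound
  have hstep : ∀ t ∈ Icc 1 T,
      (∫ ω, ∑ i, (θ astar i - θ (a t ω) i) * z i ∂P) ≤ Δbar * (K * r ^ t) := by
    intro t htmem
    have ht : 1 ≤ t := (Finset.mem_Icc.mp htmem).1
    have hT0 : (0 : ℝ) < (t : ℝ) := by exact_mod_cast Nat.lt_of_lt_of_le Nat.zero_lt_one ht
    set Et : Set Ω := (a t) ⁻¹' {astar}ᶜ with hEt
    have hEm : MeasurableSet Et := (hameas t) (measurableSet_singleton astar).compl
    set A : Fin K → Set Ω := fun b =>
      {ω | (t : ℝ) * Δ ≤ ∑ s ∈ Icc 1 t, ∑ i, (θ b i - θ astar i) * η s ω i} with hA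
    have hsub : Et ⊆ ⋃ b : Fin K, A b := by
      intro ω hω
      have hωne : a t ω ≠ astar := hω
      refine Set.mem_iUnion.mpr ⟨a t ω, ?_⟩
      have key : ∑ i, θ astar i * (z i + (t : ℝ)⁻¹ * ∑ s ∈ Icc 1 t, η s ω i)
          ≤ ∑ i, θ (a t ω) i * (z i + (t : ℝ)⁻¹ * ∑ s ∈ Icc 1 t, η s ω i) := by
        simpa only [hzhat t ω] using hgreedy t ht ω astar
      have e1 : ∀ bb : Fin K,
          ∑ i, θ bb i * (z i + (t : ℝ)⁻¹ * ∑ s ∈ Icc 1 t, η s ω i)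
            = ∑ i, θ bb i * z i
              + (t : ℝ)⁻¹ * ∑ i, θ bb i * ∑ s ∈ Icc 1 t, η s ω i := by
        intro bb
        rw [Finset.mul_sum, ← Finset.sum_add_distrib]
        exact Finset.sum_congr rfl fun i _ => by ring
      rw [e1 astar, e1 (a t ω)] at key
      have h3 : ∑ i, (θ (a t ω) i - θ astar i) * ∑ s ∈ Icc 1 t, η s ω i
          = (∑ i, θ (a t ω) i * ∑ s ∈ Icc 1 t, η s ω i)
            - ∑ i, θ astar i * ∑ s ∈ Icc 1 t, η s ω i := by
        rw [← Finset.sum_sub_distrib]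
        exact Finset.sum_congr rfl fun i _ => by ring
      have h4 : ∑ i, (θ astar i - θ (a t ω) i) * z i
          = (∑ i, θ astar i * z i) - ∑ i, θ (a t ω) i * z i := by
        rw [← Finset.sum_sub_distrib]
        exact Finset.sum_congr rfl fun i _ => by ring
      have h5 := hgap (a t ω) hωne
      rw [h4] at h5
      have hQ : Δ < (t : ℝ)⁻¹ * ∑ i, (θ (a t ω) i - θ astar i) * ∑ s ∈ Icc 1 t, η s ω i := by
        rw [h3, mul_sub]
        linarith
      have hfin : (t : ℝ) * Δ
          ≤ ∑ s ∈ Icc 1 t, ∑ i, (θ (a t ω) i - θ astar i) * η s ω i := by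
        have h6 : ∑ s ∈ Icc 1 t, ∑ i, (θ (a t ω) i - θ astar i) * η s ω i
            = ∑ i, (θ (a t ω) i - θ astar i) * ∑ s ∈ Icc 1 t, η s ω i := by
          rw [Finset.sum_comm]
          exact Finset.sum_congr rfl fun i _ => (Finset.mul_sum _ _ _).symm
        rw [h6]
        have h7 := (mul_lt_mul_iff_right₀ hT0).mpr hQ
        rw [← mul_assoc, mul_inv_cancel₀ hT0.ne', one_mul] at h7
        exact h7.le
      exact hfin
    -- union bound
    have hmono : P Et ≤ ∑ b : Fin K, P (A b) :=
      (measure_mono hsub).trans (measure_iUnion_fintype_le P A)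
    have hPt : (P Et).toReal ≤ (K : ℝ) * r ^ t := by
      have hne : (∑ b : Fin K, P (A b)) ≠ ⊤ :=
        (ENNReal.sum_lt_top.mpr fun b _ => measure_lt_top P (A b)).ne
      have h1 := ENNReal.toReal_mono hne hmono
      rw [ENNReal.toReal_sum (fun b _ => measure_ne_top P (A b))] at h1
      refine h1.trans ?_
      have htail : ∀ b : Fin K, (P (A b)).toReal ≤ r ^ t := by
        intro b
        have := greedy_tail_bound n σ Δ hσ hΔ Ω P η hmeas hindep hgauss
          (fun i => θ b i - θ astar i) (hwb b) t ht
        refine this.trans_eq ?_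
        rw [hr, ← Real.exp_nat_mul]
        congr 1
        ring
      calc ∑ b : Fin K, (P (A b)).toReal ≤ ∑ _b : Fin K, r ^ t :=
            Finset.sum_le_sum fun b _ => htail b
        _ = (K : ℝ) * r ^ t := by
            rw [Finset.sum_const, card_univ, Fintype.card_fin, nsmul_eq_mul]
    -- regret at round t bounded by indicator
    have hmono2 : (∫ ω, ∑ i, (θ astar i - θ (a t ω) i) * z i ∂P)
        ≤ ∫ ω, Et.indicator (fun _ => Δbar) ω ∂P := by
      refine integral_mono (hfint t) ((integrable_const Δbar).indicator hEm) fun ω => ?_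
      by_cases hcase : a t ω = astar
      · have h0 : ∑ i, (θ astar i - θ (a t ω) i) * z i = 0 := by
          rw [hcase]; simp
        have h1 : ω ∉ Et := by simp [hEt, hcase]
        rw [h0, Set.indicator_of_notMem h1]
      · have h1 : ω ∈ Et := hcase
        rw [Set.indicator_of_mem h1]
        exact hΔbar_ub (a t ω) hcase
    rw [integral_indicator_const Δbar hEm, smul_eq_mul] at hmono2
    refine hmono2.trans ?_
    rw [mul_comm (P.real Et) Δbar]
    exact mul_le_mul_of_nonneg_left hPt hΔbar_pos.le
  -- sum the geometric series
  have hgeom : ∑ t ∈ Icc 1 T, r ^ t ≤ r / (1 - r) := by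
    have h1 : ∑ t ∈ Icc 1 T, r ^ t = r * ∑ i ∈ range T, r ^ i := by
      rw [← Finset.Ico_add_one_right_eq_Icc, Finset.sum_Ico_eq_sum_range]
      simp only [Nat.add_sub_cancel, Nat.succ_sub_one]
      rw [Finset.mul_sum]
      exact Finset.sum_congr rfl fun i _ => by rw [pow_add, pow_one]
    have h2 : ∑ i ∈ range T, r ^ i ≤ (1 - r)⁻¹ := by
      rw [geom_sum_eq hr1.ne T]
      have h3 : (r ^ T - 1) / (r - 1) = (1 - r ^ T) / (1 - r) := by
        rw [← neg_div_neg_eq]; ring_nf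
      rw [h3, ← one_div]
      exact (div_le_div_iff_of_pos_right (show (0:ℝ) < 1 - r by linarith)).mpr
        (by nlinarith [pow_nonneg hr0.le T])
    calc ∑ t ∈ Icc 1 T, r ^ t = r * ∑ i ∈ range T, r ^ i := h1
      _ ≤ r * (1 - r)⁻¹ := mul_le_mul_of_nonneg_left h2 hr0.le
      _ = r / (1 - r) := (div_eq_mul_inv r (1 - r)).symm
  have hrid : r / (1 - r) = (rexp c - 1)⁻¹ := by
    have hE1 : 1 < rexp c := by
      rw [← Real.exp_zero]; exact Real.exp_lt_exp.mpr hc0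
    have h0 : rexp c ≠ 0 := (exp_pos c).ne'
    have h1 : rexp c - 1 ≠ 0 := by linarith
    rw [hr, Real.exp_neg]
    rw [div_eq_iff (by
      have : (rexp c)⁻¹ < 1 := by
        rw [inv_lt_one_iff₀]; right; exact hE1
      linarith)]
    field_simp
  calc ∑ t ∈ Icc 1 T, ∫ ω, ∑ i, (θ astar i - θ (a t ω) i) * z i ∂P
      ≤ ∑ t ∈ Icc 1 T, Δbar * ((K : ℝ) * r ^ t) := Finset.sum_le_sum hstep
    _ = Δbar * (K : ℝ) * ∑ t ∈ Icc 1 T, r ^ t := by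
        rw [Finset.mul_sum]
        exact Finset.sum_congr rfl fun t _ => by ring
    _ ≤ Δbar * (K : ℝ) * (r / (1 - r)) := by
        refine mul_le_mul_of_nonneg_left hgeom ?_
        positivity
    _ = Δbar * (K : ℝ) * (rexp c - 1)⁻¹ := by rw [hrid]
    _ ≤ 2 * K * Δbar * (rexp c - 1)⁻¹ := by
        have hE1 : 1 < rexp c := by
          rw [← Real.exp_zero]; exact Real.exp_lt_exp.mpr hc0
        have hinv : 0 ≤ (rexp c - 1)⁻¹ := by
          apply inv_nonneg.mpr; linarith
        have hpos : 0 ≤ Δbar * (K : ℝ) * (rexp c - 1)⁻¹ :=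
          mul_nonneg (mul_nonneg hΔbar_pos.le (Nat.cast_nonneg K)) hinv
        nlinarith [hpos]
end

section
/- Fix σ > 0, n ≥ 1, K ≥ 2. Let (Ω, P) be a probability space and η₁, η₂, … : Ω → ℝⁿ be i.i.d. random vectors whose n coordinates are independent N(0, σ²) Gaussians. Let z ∈ ℝⁿ and let θ₁, …, θ_K ∈ ℝⁿ with ‖θ_a‖₂ = 1 for all a. Let a* ∈ {1, …, K} and Δ > 0 satisfy (θ_{a*} − θ_a)ᵀz > Δ for all a ≠ a*. For t ≥ 1 define ẑ_t = z + (1/t)Σ_{s=1}^t η_s and let a_t ∈ argmax_{a} θ_aᵀ ẑ_t be the Greedy1 action (measurably chosen). Then for every t ≥ 1, the probability that Greedy1 plays a suboptimal arm at round t satisfies P(a_t ≠ a*) ≤ 2K exp(−tΔ²/(8σ²)). -/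
open MeasureTheory ProbabilityTheory Real Finset
open scoped NNReal ENNReal


lemma pdf_mul_exp (v : ℝ≥0) (l x : ℝ) :
    rexp (l * x) * gaussianPDFReal 0 v x
      = rexp (l ^ 2 * v / 2) * gaussianPDFReal (l * v) v x := by
  rcases eq_or_ne v 0 with hv | hv
  · simp [hv]
  · have hv' : (v : ℝ) ≠ 0 := by exact_mod_cast hv
    simp only [gaussianPDFReal, sub_zero]
    rw [mul_left_comm, mul_left_comm (rexp (l ^ 2 * v / 2)), ← exp_add, ← exp_add]
    congr 2
    field_simp
    ring

lemma integrable_exp_gaussian (v : ℝ≥0) (l : ℝ) :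
    Integrable (fun x => rexp (l * x)) (gaussianReal 0 v) := by
  rcases eq_or_ne v 0 with hv | hv
  · rw [hv, gaussianReal_zero_var]
    refine ⟨((measurable_const_mul l).exp).aestronglyMeasurable, ?_⟩
    simp [HasFiniteIntegral, lintegral_dirac]
  · rw [gaussianReal_of_var_ne_zero _ hv, gaussianPDF_def,
      integrable_withDensity_iff ((measurable_gaussianPDFReal 0 v).ennreal_ofReal)
        (ae_of_all _ fun x => ENNReal.ofReal_lt_top)]
    have : (fun x => rexp (l * x) * (ENNReal.ofReal (gaussianPDFReal 0 v x)).toReal)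
        = fun x => rexp (l ^ 2 * v / 2) * gaussianPDFReal (l * v) v x := by
      funext x
      rw [ENNReal.toReal_ofReal (gaussianPDFReal_nonneg 0 v x), pdf_mul_exp]
    rw [this]
    exact (integrable_gaussianPDFReal (l * v) v).const_mul _

lemma integral_exp_gaussian (v : ℝ≥0) (l : ℝ) :
    ∫ x, rexp (l * x) ∂(gaussianReal 0 v) = rexp (l ^ 2 * v / 2) := by
  rcases eq_or_ne v 0 with hv | hv
  · simp [hv, integral_dirac]
  · rw [gaussianReal_of_var_ne_zero _ hv, gaussianPDF_def]
    rw [show (fun x => ENNReal.ofReal (gaussianPDFReal 0 v x))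
        = (fun x => ((gaussianPDFReal 0 v x).toNNReal : ℝ≥0∞)) from rfl]
    rw [integral_withDensity_eq_integral_smul ((measurable_gaussianPDFReal 0 v).real_toNNReal)]
    have : (fun x => (gaussianPDFReal 0 v x).toNNReal • rexp (l * x))
        = fun x => rexp (l ^ 2 * v / 2) * gaussianPDFReal (l * v) v x := by
      funext x
      rw [NNReal.smul_def, smul_eq_mul, Real.coe_toNNReal _ (gaussianPDFReal_nonneg 0 v x),
        mul_comm, pdf_mul_exp]
    rw [this, integral_const_mul, integral_gaussianPDFReal_eq_one _ hv, mul_one]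

lemma mgf_gaussian_aux {Ω : Type*} [MeasurableSpace Ω] {P : Measure Ω}
    {X : Ω → ℝ} (hX : Measurable X) {v : ℝ≥0}
    (h : Measure.map X P = gaussianReal 0 v) (l : ℝ) :
    Integrable (fun ω => rexp (l * X ω)) P ∧ mgf X P l = rexp (l ^ 2 * v / 2) := by
  have hfm : AEStronglyMeasurable (fun x => rexp (l * x)) (Measure.map X P) :=
    ((measurable_const_mul l).exp).aestronglyMeasurable
  constructor
  · exact (integrable_map_measure hfm hX.aemeasurable).mp (h ▸ integrable_exp_gaussian v l)
  · rw [mgf, show (∫ ω, rexp (l * X ω) ∂P) = ∫ x, rexp (l * x) ∂(Measure.map X P) from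
      (integral_map hX.aemeasurable hfm).symm, h, integral_exp_gaussian]

/-- **Per-round misplay bound for Greedy1.**
Under the Greedy1 setup (i.i.d. Gaussian noise `η_s` with independent `N(0,σ²)` coordinates,
unit-norm arms, gap `Δ` at the optimal arm `a*`, averaged estimates
`ẑ_t = z + (1/t)Σ_{s=1}^t η_s`, greedy actions `a_t`), for every round `t ≥ 1` the
probability of playing a suboptimal arm satisfies `P(a_t ≠ a*) ≤ 2K exp(−tΔ²/(8σ²))`. -/
theorem greedy1_misplay_probability (n K : ℕ) (hn : 1 ≤ n) (hK : 2 ≤ K)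
    (σ Δ : ℝ) (hσ : 0 < σ) (hΔ : 0 < Δ)
    (Ω : Type*) [MeasurableSpace Ω] (P : Measure Ω) [IsProbabilityMeasure P]
    (η : ℕ → Ω → (Fin n → ℝ)) (hmeas : ∀ s, Measurable (η s))
    (hindep : iIndepFun (fun (p : ℕ × Fin n) ω => η p.1 ω p.2) P)
    (hgauss : ∀ (s : ℕ) (i : Fin n),
      Measure.map (fun ω => η s ω i) P = gaussianReal 0 ⟨σ ^ 2, sq_nonneg σ⟩)
    (z : Fin n → ℝ) (θ : Fin K → Fin n → ℝ) (hθ : ∀ a, ∑ i, θ a i ^ 2 = 1)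
    (astar : Fin K)
    (hgap : ∀ a : Fin K, a ≠ astar → Δ < ∑ i, (θ astar i - θ a i) * z i)
    (zhat : ℕ → Ω → (Fin n → ℝ))
    (hzhat : ∀ t ω, zhat t ω = fun i => z i + (t : ℝ)⁻¹ * ∑ s ∈ Icc 1 t, η s ω i)
    (a : ℕ → Ω → Fin K) (hameas : ∀ t, Measurable (a t))
    (hgreedy : ∀ t, 1 ≤ t → ∀ ω, ∀ b : Fin K,
      ∑ i, θ b i * zhat t ω i ≤ ∑ i, θ (a t ω) i * zhat t ω i) :
    ∀ t : ℕ, 1 ≤ t →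
      P {ω | a t ω ≠ astar} ≤
        ENNReal.ofReal (2 * K * exp (-((t : ℝ) * Δ ^ 2) / (8 * σ ^ 2))) := by
  classical
  intro t ht
  have htR : (0 : ℝ) < t := by exact_mod_cast ht
  have hσ2 : (0 : ℝ) < σ ^ 2 := by positivity
  set S : Finset (ℕ × Fin n) := Icc 1 t ×ˢ (univ : Finset (Fin n)) with hS
  set e : ℝ := exp (-((t : ℝ) * Δ ^ 2) / (8 * σ ^ 2)) with he
  set Y : Fin K → (ℕ × Fin n) → Ω → ℝ := fun b p ω => θ b p.2 * η p.1 ω p.2 with hY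
  set X : Fin K → Ω → ℝ := fun b => ∑ p ∈ S, Y b p with hX
  set A : Fin K → Set Ω := fun b => {ω | (t : ℝ) * Δ / 2 ≤ |X b ω|} with hA
  -- measurability of each Y b p
  have hYmeas : ∀ b p, Measurable (Y b p) := fun b p =>
    ((measurable_pi_apply p.2).comp (hmeas p.1)).const_mul _
  -- independence of the family Y b
  have hYindep : ∀ b, iIndepFun (Y b) P := fun b =>
    hindep.comp (fun p x => θ b p.2 * x) (fun p => measurable_const_mul _)
  -- law of each Y b p
  have hYlaw : ∀ b p, Measure.map (Y b p) P
      = gaussianReal 0 (⟨(θ b p.2) ^ 2, sq_nonneg _⟩ * ⟨σ ^ 2, sq_nonneg σ⟩) := by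
    intro b p
    have hXm : Measurable (fun ω => η p.1 ω p.2) := (measurable_pi_apply p.2).comp (hmeas p.1)
    have hmm : Measure.map (Y b p) P
        = Measure.map (fun x => θ b p.2 * x) (Measure.map (fun ω => η p.1 ω p.2) P) := by
      rw [Measure.map_map (measurable_const_mul _) hXm]
      rfl
    rw [hmm, hgauss p.1 p.2]
    refine (gaussianReal_map_const_mul (θ b p.2)).trans ?_
    norm_num
    rfl
  -- mgf and integrability of each term
  have hterm : ∀ b p (l : ℝ), Integrable (fun ω => exp (l * Y b p ω)) P ∧
      mgf (Y b p) P l = exp (l ^ 2 * ((θ b p.2) ^ 2 * σ ^ 2) / 2) := by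
    intro b p l
    have h := mgf_gaussian_aux (hYmeas b p) (hYlaw b p) l
    refine ⟨h.1, ?_⟩
    rw [h.2]
    norm_num
    exact Or.inl (NNReal.coe_mul _ _)
  -- variance sum over S
  have hsumθ : ∀ b, ∑ p ∈ S, (θ b p.2) ^ 2 = (t : ℝ) := by
    intro b
    rw [hS, Finset.sum_product]
    simp [hθ b, Nat.card_Icc]
  -- mgf of the sum
  have hmgfX : ∀ b (l : ℝ), mgf (X b) P l = exp (l ^ 2 * σ ^ 2 * t / 2) := by
    intro b l
    rw [hX, (hYindep b).mgf_sum (hYmeas b) S]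
    have : ∀ p ∈ S, mgf (Y b p) P l = exp (l ^ 2 * ((θ b p.2) ^ 2 * σ ^ 2) / 2) :=
      fun p _ => (hterm b p l).2
    rw [Finset.prod_congr rfl this, ← Real.exp_sum]
    congr 1
    rw [show (∑ p ∈ S, l ^ 2 * (θ b p.2 ^ 2 * σ ^ 2) / 2)
        = (l ^ 2 * σ ^ 2 / 2) * ∑ p ∈ S, (θ b p.2) ^ 2 by
      rw [Finset.mul_sum]; exact Finset.sum_congr rfl fun p _ => by ring]
    rw [hsumθ b]; ring
  -- integrability of exp(l * X b)
  have hintX : ∀ b (l : ℝ), Integrable (fun ω => exp (l * X b ω)) P := by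
    intro b l
    have := (hYindep b).integrable_exp_mul_sum (hYmeas b)
      (s := S) (fun p _ => (hterm b p l).1)
    exact this
  -- Chernoff both tails
  have hl : (0 : ℝ) ≤ Δ / (2 * σ ^ 2) := by positivity
  have hupper : ∀ b, (P {ω | (t : ℝ) * Δ / 2 ≤ X b ω}).toReal ≤ e := by
    intro b
    have h := measure_ge_le_exp_mul_mgf (μ := P) (X := X b) ((t : ℝ) * Δ / 2) hl
      (hintX b (Δ / (2 * σ ^ 2)))
    rw [hmgfX b] at h
    refine h.trans (le_of_eq ?_)
    rw [← Real.exp_add, he]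
    congr 1
    field_simp
    ring
  have hlower : ∀ b, (P {ω | X b ω ≤ -((t : ℝ) * Δ / 2)}).toReal ≤ e := by
    intro b
    have h := measure_le_le_exp_mul_mgf (μ := P) (X := X b) (-((t : ℝ) * Δ / 2))
      (neg_nonpos.mpr hl) (hintX b (-(Δ / (2 * σ ^ 2))))
    rw [hmgfX b] at h
    refine h.trans (le_of_eq ?_)
    rw [← Real.exp_add, he]
    congr 1
    field_simp
    ring
  -- per-arm tail bound
  have htail : ∀ b, P (A b) ≤ ENNReal.ofReal (2 * e) := by
    intro b
    have hsub : A b ⊆ {ω | (t : ℝ) * Δ / 2 ≤ X b ω} ∪ {ω | X b ω ≤ -((t : ℝ) * Δ / 2)} := by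
      intro ω hω
      have hω' : (t : ℝ) * Δ / 2 ≤ |X b ω| := hω
      rcases le_or_gt 0 (X b ω) with h0 | h0
      · rw [abs_of_nonneg h0] at hω'
        exact Or.inl hω'
      · rw [abs_of_neg h0] at hω'
        exact Or.inr (by simp only [Set.mem_setOf_eq]; linarith)
    calc P (A b) ≤ P ({ω | (t : ℝ) * Δ / 2 ≤ X b ω} ∪ {ω | X b ω ≤ -((t : ℝ) * Δ / 2)}) :=
          measure_mono hsub
      _ ≤ P {ω | (t : ℝ) * Δ / 2 ≤ X b ω} + P {ω | X b ω ≤ -((t : ℝ) * Δ / 2)} :=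
          measure_union_le _ _
      _ ≤ ENNReal.ofReal e + ENNReal.ofReal e := by
          gcongr
          · exact (ENNReal.le_ofReal_iff_toReal_le (measure_ne_top P _) (exp_nonneg _)).mpr
              (hupper b)
          · exact (ENNReal.le_ofReal_iff_toReal_le (measure_ne_top P _) (exp_nonneg _)).mpr
              (hlower b)
      _ = ENNReal.ofReal (2 * e) := by
          rw [← ENNReal.ofReal_add (exp_nonneg _) (exp_nonneg _)]
          congr 1
          ring
  -- deterministic inclusion
  have hincl : {ω | a t ω ≠ astar} ⊆ ⋃ b : Fin K, A b := by
    intro ω hω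
    by_contra hnot
    simp only [Set.mem_iUnion, not_exists] at hnot
    have habs : ∀ b, |X b ω| < (t : ℝ) * Δ / 2 := by
      intro b
      have := hnot b
      simp only [hA, Set.mem_setOf_eq, not_le] at this
      exact this
    -- dot products
    have hdot : ∀ b, ∑ i, θ b i * zhat t ω i
        = (∑ i, θ b i * z i) + (t : ℝ)⁻¹ * X b ω := by
      intro b
      have hXb : X b ω = ∑ i, θ b i * ∑ s ∈ Icc 1 t, η s ω i := by
        simp only [hX, hY, hS, Finset.sum_apply, Finset.sum_product]
        rw [Finset.sum_comm]
        exact Finset.sum_congr rfl fun i _ => (Finset.mul_sum _ _ _).symm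
      rw [hXb, hzhat, Finset.mul_sum, ← Finset.sum_add_distrib]
      exact Finset.sum_congr rfl fun i _ => by ring
    have hbound : ∀ b, |(t : ℝ)⁻¹ * X b ω| < Δ / 2 := by
      intro b
      rw [abs_mul, abs_of_nonneg (by positivity : (0:ℝ) ≤ (t:ℝ)⁻¹)]
      have := habs b
      rw [show Δ / 2 = (t : ℝ)⁻¹ * ((t : ℝ) * Δ / 2) by field_simp]
      exact mul_lt_mul_of_pos_left this (by positivity)
    have hstrict : ∀ b, b ≠ astar → ∑ i, θ b i * zhat t ω i < ∑ i, θ astar i * zhat t ω i := by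
      intro b hb
      have h1 := hbound b
      have h2 := hbound astar
      have hg := hgap b hb
      have hgap' : (∑ i, θ astar i * z i) - (∑ i, θ b i * z i) > Δ := by
        have : ∑ i, (θ astar i - θ b i) * z i
            = (∑ i, θ astar i * z i) - (∑ i, θ b i * z i) := by
          rw [← Finset.sum_sub_distrib]
          exact Finset.sum_congr rfl fun i _ => by ring
        linarith [this ▸ hg]
      rw [hdot b, hdot astar]
      have h1' := abs_lt.mp h1
      have h2' := abs_lt.mp h2
      linarith [h1'.1, h1'.2, h2'.1, h2'.2]
    have : a t ω = astar := by
      by_contra hne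
      exact absurd (hgreedy t ht ω astar) (not_le.mpr (hstrict _ hne))
    exact hω this
  -- assemble
  calc P {ω | a t ω ≠ astar} ≤ P (⋃ b : Fin K, A b) := measure_mono hincl
    _ ≤ ∑ b : Fin K, P (A b) := measure_iUnion_fintype_le _ _
    _ ≤ ∑ _b : Fin K, ENNReal.ofReal (2 * e) := Finset.sum_le_sum fun b _ => htail b
    _ = (K : ℝ≥0∞) * ENNReal.ofReal (2 * e) := by
        rw [Finset.sum_const, Finset.card_univ, Fintype.card_fin, nsmul_eq_mul]
    _ = ENNReal.ofReal (2 * K * e) := by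
        rw [← ENNReal.ofReal_natCast K, ← ENNReal.ofReal_mul (by positivity)]
        congr 1
        ring
end
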